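/- arXiv:2206.02224 — 3 statements merged into one kernel-verified Lean document; each statement's English description precedes it below -/
import Mathlib

section
/- For any sequence of positive reals (or integers) x_1,...,x_p with x_1+...+x_p = k, and any s ≥ 1, the sum over all tuples (i_1,...,i_s) ∈ [p]^s of the product ∏_{j=1}^s (x_{i_j} - n(i,j)), where n(i,j) is the number of indices m ≤ j with i_m = i_j, equals the falling factorial (k-p)(k-p-1)⋯(k-p-s+1). -/
open Finset Fin

lemma aux (p s : ℕ) (k : ℤ) (x : Fin p → ℤ) (hx : ∑ i, x i = k) :
    ∑ i : Fin s → Fin p,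
      ∏ j : Fin s,
        (x (i j) - (Finset.univ.filter (fun m : Fin s => m ≤ j ∧ i m = i j)).card)
    = ∏ t ∈ Finset.range s, (k - (p : ℤ) - (t : ℤ)) := by
  induction s with
  | zero => simp
  | succ s ih =>
    rw [← Equiv.sum_comp (Fin.snocEquiv (fun _ => Fin p)), Fintype.sum_prod_type_right]
    rw [Finset.prod_range_succ, ← ih]
    rw [Finset.sum_mul]
    refine Finset.sum_congr rfl fun i _ => ?_
    have key : ∀ a : Fin p,
        (∏ j : Fin (s+1), (x (Fin.snocEquiv (fun _ => Fin p) (a, i) j)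
          - (Finset.univ.filter (fun m : Fin (s+1) => m ≤ j ∧
              Fin.snocEquiv (fun _ => Fin p) (a, i) m = Fin.snocEquiv (fun _ => Fin p) (a, i) j)).card))
        = (∏ j : Fin s, (x (i j) - (Finset.univ.filter (fun m : Fin s => m ≤ j ∧ i m = i j)).card))
          * (x a - ((Finset.univ.filter (fun m : Fin s => i m = a)).card + 1)) := by
      intro a
      simp only [Fin.snocEquiv, Equiv.coe_fn_mk]
      rw [Fin.prod_univ_castSucc]
      simp only [Fin.snoc_castSucc, Fin.snoc_last]
      congr 1
      · refine Finset.prod_congr rfl fun j _ => ?_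
        congr 2
        rw [Finset.card_filter, Finset.card_filter, Fin.sum_univ_castSucc]
        simp [Fin.castSucc_le_castSucc_iff, (Fin.castSucc_lt_last j).not_ge]
      · have : (Finset.univ.filter (fun m : Fin (s+1) => m ≤ Fin.last s ∧
            (Fin.snoc i a : Fin (s+1) → Fin p) m = a)).card
            = (Finset.univ.filter (fun m : Fin s => i m = a)).card + 1 := by
          rw [Finset.card_filter, Finset.card_filter, Fin.sum_univ_castSucc]
          simp [Fin.le_last]
        rw [this]
        push_cast
        ring
    calc ∑ a : Fin p, _ = ∑ a : Fin p,
        (∏ j : Fin s, (x (i j) - (Finset.univ.filter (fun m : Fin s => m ≤ j ∧ i m = i j)).card))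
          * (x a - ((Finset.univ.filter (fun m : Fin s => i m = a)).card + 1)) :=
          Finset.sum_congr rfl fun a _ => key a
      _ = _ := by
        rw [← Finset.mul_sum]
        congr 1
        have hfib : ∑ a : Fin p, ((Finset.univ.filter (fun m : Fin s => i m = a)).card : ℤ) = s := by
          have := Finset.card_eq_sum_card_fiberwise (f := i) (s := Finset.univ) (t := Finset.univ)
            (fun x _ => Finset.mem_univ _)
          simp only [Finset.card_univ, Fintype.card_fin] at this
          exact_mod_cast this.symm
        rw [Finset.sum_sub_distrib, hx, Finset.sum_add_distrib, hfib]
        simp [Finset.card_univ]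
        ring

/-- Falling-factorial sum identity over tuples. -/
theorem stmt0 (p s : ℕ) (hs : 1 ≤ s) (k : ℤ) (x : Fin p → ℤ)
    (hx : ∑ i, x i = k) :
    ∑ i : Fin s → Fin p,
      ∏ j : Fin s,
        (x (i j) - (Finset.univ.filter (fun m : Fin s => m ≤ j ∧ i m = i j)).card)
    = ∏ t ∈ Finset.range s, (k - (p : ℤ) - (t : ℤ)) := by
  exact aux p s k x hx
end

section
/- The number of non-crossing partitions of [k] with exactly α_i parts of size i for each i (where ∑ i·α_i = k and a = ∑ α_i) equals C(k, a-1) · (a-1)!/(α_1!⋯α_k!). -/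
open Finset
open scoped Classical

/-- A finset of finsets of `Fin k` is a partition of `[k]`. -/
def IsPartitionOf (k : ℕ) (P : Finset (Finset (Fin k))) : Prop :=
  (∀ p ∈ P, p.Nonempty) ∧
  (∀ p ∈ P, ∀ q ∈ P, p ≠ q → Disjoint p q) ∧
  P.sup id = Finset.univ

/-- The partition is non-crossing. -/
def IsNonCrossing (k : ℕ) (P : Finset (Finset (Fin k))) : Prop :=
  ¬ ∃ a b c d : Fin k, a < b ∧ b < c ∧ c < d ∧
    ∃ p ∈ P, ∃ q ∈ P, p ≠ q ∧ a ∈ p ∧ c ∈ p ∧ b ∈ q ∧ d ∈ q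

variable {k : ℕ}

/-- the (min ↦ size) sequence of a partition -/
noncomputable def NPmins (P : Finset (Finset (Fin k))) : Fin k → ℕ :=
  fun j => ∑ p ∈ P.filter (fun p => j ∈ p ∧ ∀ x ∈ p, j ≤ x), p.card

def NPpart (V : Finset (Fin k)) (P : Finset (Finset (Fin k))) : Prop :=
  (∀ p ∈ P, p.Nonempty) ∧ (∀ p ∈ P, ∀ q ∈ P, p ≠ q → Disjoint p q) ∧ P.sup id = V

def NPdom (V : Finset (Fin k)) (c : Fin k → ℕ) : Prop :=
  (∀ j, c j ≠ 0 → j ∈ V) ∧ (∑ j, c j = V.card) ∧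
  ∀ t : Fin k, ((V.filter (· < t)).card ≤ ∑ j ∈ univ.filter (· < t), c j)

lemma filter_isMin {P : Finset (Finset (Fin k))} {p : Finset (Fin k)}
    (hd : ∀ p ∈ P, ∀ q ∈ P, p ≠ q → Disjoint p q) (hp : p ∈ P) {j : Fin k}
    (hj : j ∈ p ∧ ∀ x ∈ p, j ≤ x) :
    P.filter (fun q => j ∈ q ∧ ∀ x ∈ q, j ≤ x) = {p} := by
  ext q
  simp only [mem_filter, mem_singleton]
  constructor
  · rintro ⟨hq, hjq, -⟩
    by_contra hne
    exact Finset.disjoint_left.mp (hd q hq p hp hne) hjq hj.1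
  · rintro rfl; exact ⟨hp, hj⟩

lemma NPmins_eq_card {P : Finset (Finset (Fin k))} {p : Finset (Fin k)}
    (hd : ∀ p ∈ P, ∀ q ∈ P, p ≠ q → Disjoint p q) (hp : p ∈ P) {j : Fin k}
    (hj : j ∈ p ∧ ∀ x ∈ p, j ≤ x) : NPmins P j = p.card := by
  rw [NPmins, filter_isMin hd hp hj, sum_singleton]

lemma exists_block_of_NPmins_ne_zero {P : Finset (Finset (Fin k))} {j : Fin k}
    (h : NPmins P j ≠ 0) : ∃ p ∈ P, j ∈ p ∧ ∀ x ∈ p, j ≤ x := by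
  obtain ⟨p, hp, -⟩ := Finset.exists_ne_zero_of_sum_ne_zero h
  exact ⟨p, (mem_filter.mp hp).1, (mem_filter.mp hp).2⟩

lemma sum_NPmins {P : Finset (Finset (Fin k))} (hne : ∀ p ∈ P, p.Nonempty)
    (s : Finset (Fin k)) :
    ∑ j ∈ s, NPmins P j
      = ∑ p ∈ P.filter (fun p => ∃ j ∈ s, j ∈ p ∧ ∀ x ∈ p, j ≤ x), p.card := by
  unfold NPmins
  rw [sum_filter]
  simp only [sum_filter]
  rw [Finset.sum_comm]
  refine Finset.sum_congr rfl fun p hp => ?_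
  by_cases h : ∃ j ∈ s, j ∈ p ∧ ∀ x ∈ p, j ≤ x
  · obtain ⟨j₀, hj₀s, hj₀⟩ := h
    rw [if_pos ⟨j₀, hj₀s, hj₀⟩]
    rw [Finset.sum_eq_single j₀]
    · rw [if_pos hj₀]
    · intro j hj hne'
      rw [if_neg]
      rintro ⟨hjp, hjle⟩
      exact hne' (le_antisymm (hjle j₀ hj₀.1) (hj₀.2 j hjp))
    · intro hj₀s'; exact absurd hj₀s hj₀s'
  · rw [if_neg h]
    refine Finset.sum_eq_zero fun j hj => ?_
    rw [if_neg (fun hc => h ⟨j, hj, hc⟩)]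

lemma sum_NPmins_univ {V : Finset (Fin k)} {P : Finset (Finset (Fin k))}
    (hP : NPpart V P) : ∑ j, NPmins P j = V.card := by
  obtain ⟨hne, hd, hsup⟩ := hP
  rw [sum_NPmins hne]
  have hfil : P.filter (fun p => ∃ j ∈ (univ : Finset (Fin k)), j ∈ p ∧ ∀ x ∈ p, j ≤ x) = P := by
    refine Finset.filter_true_of_mem fun p hp => ?_
    obtain ⟨hne'⟩ := hne p hp
    exact ⟨p.min' (hne p hp), mem_univ _, p.min'_mem _, fun x hx => p.min'_le x hx⟩
  rw [hfil, ← hsup, Finset.sup_eq_biUnion, Finset.card_biUnion]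
  · rfl
  · exact fun p hp q hq hpq => hd p hp q hq hpq

lemma NPdom_of_NPpart {V : Finset (Fin k)} {P : Finset (Finset (Fin k))}
    (hP : NPpart V P) : NPdom V (NPmins P) := by
  obtain ⟨hne, hd, hsup⟩ := hP
  refine ⟨?_, sum_NPmins_univ ⟨hne, hd, hsup⟩, ?_⟩
  · intro j hj
    obtain ⟨p, hp, hjp, -⟩ := exists_block_of_NPmins_ne_zero hj
    rw [← hsup]
    exact Finset.mem_sup.mpr ⟨p, hp, hjp⟩
  · intro t
    rw [sum_NPmins hne]
    refine le_trans (Finset.card_le_card ?_) (le_of_eq (Finset.card_biUnion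
      (fun p hp q hq hpq =>
        hd p (mem_of_mem_filter p hp) q (mem_of_mem_filter q hq) hpq)))
    refine fun v hv => ?_
    rw [mem_filter] at hv
    obtain ⟨hvV, hvt⟩ := hv
    rw [← hsup] at hvV
    obtain ⟨p, hp, hvp⟩ := Finset.mem_sup.mp hvV
    refine Finset.mem_biUnion.mpr ⟨p, ?_, hvp⟩
    refine mem_filter.mpr ⟨hp, p.min' ⟨v, hvp⟩, ?_, p.min'_mem _, fun x hx => p.min'_le x hx⟩
    exact mem_filter.mpr ⟨mem_univ _, lt_of_le_of_lt (p.min'_le v hvp) hvt⟩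

/-- number of elements of `Fin n` with value `< t`, for `t ≤ n`. -/
lemma card_filter_val_lt (n t : ℕ) (h : t ≤ n) :
    ((univ : Finset (Fin n)).filter (fun j : Fin n => (j : ℕ) < t)).card = t := by
  conv_rhs => rw [← Finset.card_range t]
  apply Finset.card_bij (fun (j : Fin n) _ => (j : ℕ))
  · intro j hj
    exact mem_range.mpr (mem_filter.mp hj).2
  · intro j₁ h₁ j₂ h₂ hv
    exact Fin.ext hv
  · intro m hm
    have hm' := mem_range.mp hm
    exact ⟨⟨m, lt_of_lt_of_le hm' h⟩, mem_filter.mpr ⟨mem_univ _, hm'⟩, rfl⟩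

/-- membership characterization for down-closed subsets -/
lemma downclosed_mem {W S : Finset (Fin k)} (hS : S ⊆ W)
    (dc : ∀ y ∈ W, ∀ x ∈ S, y ≤ x → y ∈ S) (y : Fin k) :
    y ∈ S ↔ y ∈ W ∧ (W.filter (· < y)).card < S.card := by
  constructor
  · intro hy
    refine ⟨hS hy, ?_⟩
    have hsub : insert y (W.filter (· < y)) ⊆ S := by
      intro z hz
      rcases Finset.mem_insert.mp hz with rfl | hz
      · exact hy
      · rw [mem_filter] at hz
        exact dc z hz.1 y hy (le_of_lt hz.2)
    calc (W.filter (· < y)).card < (insert y (W.filter (· < y))).card := by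
          rw [Finset.card_insert_of_notMem (by simp)]; omega
      _ ≤ S.card := Finset.card_le_card hsub
  · rintro ⟨hyW, hcard⟩
    by_contra hy
    have hsub : S ⊆ W.filter (· < y) := by
      intro x hx
      refine mem_filter.mpr ⟨hS hx, ?_⟩
      by_contra hxy
      exact hy (dc y hyW x hx (le_of_not_gt hxy))
    exact absurd (Finset.card_le_card hsub) (by omega)

lemma downclosed_eq {W S₁ S₂ : Finset (Fin k)} (h1 : S₁ ⊆ W) (h2 : S₂ ⊆ W)
    (dc1 : ∀ y ∈ W, ∀ x ∈ S₁, y ≤ x → y ∈ S₁) (dc2 : ∀ y ∈ W, ∀ x ∈ S₂, y ≤ x → y ∈ S₂)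
    (hcard : S₁.card = S₂.card) : S₁ = S₂ := by
  ext y
  rw [downclosed_mem h1 dc1, downclosed_mem h2 dc2, hcard]

noncomputable def pBlock (V : Finset (Fin k)) (m : Fin k) (s : ℕ) : Finset (Fin k) :=
  (univ.filter (fun j : Fin (V.filter (fun x => m ≤ x)).card => (j : ℕ) < s)).image
    ((V.filter (fun x => m ≤ x)).orderEmbOfFin rfl)

lemma pBlock_subset (V : Finset (Fin k)) (m : Fin k) (s : ℕ) :
    pBlock V m s ⊆ V.filter (fun x => m ≤ x) := by
  intro x hx
  obtain ⟨j, -, rfl⟩ := Finset.mem_image.mp hx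
  exact Finset.orderEmbOfFin_mem _ rfl j

lemma pBlock_card {V : Finset (Fin k)} {m : Fin k} {s : ℕ}
    (hs : s ≤ (V.filter (fun x => m ≤ x)).card) : (pBlock V m s).card = s := by
  rw [pBlock, Finset.card_image_of_injective _ (Finset.orderEmbOfFin _ rfl).injective,
    card_filter_val_lt _ s hs]

lemma pBlock_downclosed {V : Finset (Fin k)} {m : Fin k} {s : ℕ} :
    ∀ y ∈ V.filter (fun x => m ≤ x), ∀ x ∈ pBlock V m s, y ≤ x → y ∈ pBlock V m s := by
  intro y hy x hx hyx
  obtain ⟨j, hj, rfl⟩ := Finset.mem_image.mp hx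
  have hrange : ∃ i, (V.filter (fun x => m ≤ x)).orderEmbOfFin rfl i = y := by
    have hco := Finset.range_orderEmbOfFin (V.filter (fun x => m ≤ x)) (rfl)
    have hy' : y ∈ Set.range ((V.filter (fun x => m ≤ x)).orderEmbOfFin rfl) := by
      rw [hco]; exact_mod_cast hy
    exact hy'
  obtain ⟨i, rfl⟩ := hrange
  have hij : i ≤ j := by
    rwa [OrderEmbedding.le_iff_le] at hyx
  exact Finset.mem_image.mpr ⟨i, mem_filter.mpr ⟨mem_univ _,
    lt_of_le_of_lt hij (mem_filter.mp hj).2⟩, rfl⟩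

lemma pBlock_min_mem {V : Finset (Fin k)} {m : Fin k} {s : ℕ} (hm : m ∈ V)
    (h1 : 1 ≤ s) : m ∈ pBlock V m s := by
  have hmW : m ∈ V.filter (fun x => m ≤ x) := mem_filter.mpr ⟨hm, le_refl m⟩
  have hne : (V.filter (fun x => m ≤ x)).Nonempty := ⟨m, hmW⟩
  have hpos : 0 < (V.filter (fun x => m ≤ x)).card := Finset.card_pos.mpr hne
  have h0 : (V.filter (fun x => m ≤ x)).orderEmbOfFin rfl ⟨0, hpos⟩
      = (V.filter (fun x => m ≤ x)).min' hne := by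
    exact Finset.orderEmbOfFin_zero rfl hpos
  have hmin : (V.filter (fun x => m ≤ x)).min' hne = m := by
    refine le_antisymm (Finset.min'_le _ m hmW) ?_
    have := (V.filter (fun x => m ≤ x)).min'_mem hne
    exact (mem_filter.mp this).2
  refine Finset.mem_image.mpr ⟨⟨0, hpos⟩, mem_filter.mpr ⟨mem_univ _, by show 0 < s; omega⟩, ?_⟩
  rw [h0, hmin]

lemma pBlock_ge {V : Finset (Fin k)} {m : Fin k} {s : ℕ} :
    ∀ x ∈ pBlock V m s, m ≤ x := by
  intro x hx
  exact (mem_filter.mp (pBlock_subset V m s hx)).2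

lemma block_at_max {V : Finset (Fin k)} {P : Finset (Finset (Fin k))} (hP : NPpart V P)
    (hnc : IsNonCrossing k P) {m : Fin k}
    (hmax : ∀ j, NPmins P j ≠ 0 → j ≤ m) {p : Finset (Fin k)} (hp : p ∈ P)
    (hmp : m ∈ p ∧ ∀ x ∈ p, m ≤ x) :
    p = pBlock V m (NPmins P m) := by
  obtain ⟨hne, hd, hsup⟩ := hP
  have hcard : NPmins P m = p.card := NPmins_eq_card hd hp hmp
  have hpV : ∀ x ∈ p, x ∈ V := by
    intro x hx; rw [← hsup]; exact Finset.mem_sup.mpr ⟨p, hp, hx⟩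
  have hpW : p ⊆ V.filter (fun x => m ≤ x) :=
    fun x hx => mem_filter.mpr ⟨hpV x hx, hmp.2 x hx⟩
  have hdc : ∀ y ∈ V.filter (fun x => m ≤ x), ∀ x ∈ p, y ≤ x → y ∈ p := by
    intro y hyW x hx hyx
    by_contra hy
    have hyx' : y < x := lt_of_le_of_ne hyx (fun h => hy (h ▸ hx))
    have hmy : m < y := by
      rcases lt_or_eq_of_le (mem_filter.mp hyW).2 with h | h
      · exact h
      · exact absurd (h ▸ hmp.1) hy
    have hyV : y ∈ V := (mem_filter.mp hyW).1
    rw [← hsup] at hyV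
    obtain ⟨q, hq, hyq⟩ := Finset.mem_sup.mp hyV
    have hqp : q ≠ p := fun h => hy (h ▸ hyq)
    have hqne : q.Nonempty := hne q hq
    set m' := q.min' hqne with hm'
    have hm'q : m' ∈ q := q.min'_mem hqne
    have hm'min : ∀ x ∈ q, m' ≤ x := fun x hx => q.min'_le x hx
    have hcm' : NPmins P m' ≠ 0 := by
      rw [NPmins_eq_card hd hq ⟨hm'q, hm'min⟩]
      exact Finset.card_ne_zero.mpr hqne
    have hm'm : m' ≤ m := hmax m' hcm'
    have hm'ne : m' ≠ m := by
      intro h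
      exact Finset.disjoint_left.mp (hd q hq p hp hqp) (h ▸ hm'q) hmp.1
    exact hnc ⟨m', m, y, x, lt_of_le_of_ne hm'm hm'ne, hmy, hyx', q, hq, p, hp, hqp,
      hm'q, hyq, hmp.1, hx⟩
  have hsle : p.card ≤ (V.filter (fun x => m ≤ x)).card := Finset.card_le_card hpW
  rw [hcard]
  exact downclosed_eq hpW (pBlock_subset V m p.card) hdc pBlock_downclosed
    (by rw [pBlock_card hsle])

lemma NPpart_erase {V : Finset (Fin k)} {P : Finset (Finset (Fin k))} (hP : NPpart V P)
    {p : Finset (Fin k)} (hp : p ∈ P) {m : Fin k} (hmp : m ∈ p ∧ ∀ x ∈ p, m ≤ x) :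
    NPpart (V \ p) (P.erase p) ∧
    NPmins (P.erase p) = Function.update (NPmins P) m 0 := by
  obtain ⟨hne, hd, hsup⟩ := hP
  constructor
  · refine ⟨fun q hq => hne q (mem_of_mem_erase hq),
      fun q hq r hr hqr => hd q (mem_of_mem_erase hq) r (mem_of_mem_erase hr) hqr, ?_⟩
    apply subset_antisymm
    · intro x hx
      obtain ⟨q, hq, hxq⟩ := Finset.mem_sup.mp hx
      have hq' := mem_of_mem_erase hq
      refine Finset.mem_sdiff.mpr ⟨?_, ?_⟩
      · rw [← hsup]; exact Finset.mem_sup.mpr ⟨q, hq', hxq⟩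
      · exact fun hxp => Finset.disjoint_left.mp
          (hd q hq' p hp (Finset.ne_of_mem_erase hq)) hxq hxp
    · intro x hx
      obtain ⟨hxV, hxp⟩ := Finset.mem_sdiff.mp hx
      rw [← hsup] at hxV
      obtain ⟨q, hq, hxq⟩ := Finset.mem_sup.mp hxV
      exact Finset.mem_sup.mpr ⟨q, Finset.mem_erase.mpr
        ⟨fun h => hxp (h ▸ hxq), hq⟩, hxq⟩
  · funext j
    rw [NPmins, Finset.filter_erase]
    by_cases hj : j = m
    · subst hj
      rw [filter_isMin hd hp hmp]
      simp [Function.update_self]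
    · rw [Finset.erase_eq_of_notMem, Function.update_of_ne hj, NPmins]
      intro hmem
      obtain ⟨-, hjp, hjmin⟩ := mem_filter.mp hmem
      exact hj (le_antisymm (hjmin m hmp.1) (hmp.2 j hjp))

lemma NC_subset {P Q : Finset (Finset (Fin k))} (hsub : Q ⊆ P)
    (hnc : IsNonCrossing k P) : IsNonCrossing k Q := by
  rintro ⟨a, b, c, d, h1, h2, h3, p, hp, q, hq, hrest⟩
  exact hnc ⟨a, b, c, d, h1, h2, h3, p, hsub hp, q, hsub hq, hrest⟩

lemma NPpart_empty {P : Finset (Finset (Fin k))} (hP : NPpart ∅ P) : P = ∅ := by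
  obtain ⟨hne, -, hsup⟩ := hP
  refine Finset.eq_empty_of_forall_notMem fun p hp => ?_
  obtain ⟨x, hx⟩ := hne p hp
  have : p ⊆ (∅ : Finset (Fin k)) := by
    rw [← hsup]; exact Finset.le_sup (f := id) hp
  exact absurd (this hx) (Finset.notMem_empty x)

lemma NP_inj (V : Finset (Fin k)) : ∀ (P₁ P₂ : Finset (Finset (Fin k))),
    NPpart V P₁ → IsNonCrossing k P₁ → NPpart V P₂ → IsNonCrossing k P₂ →
    NPmins P₁ = NPmins P₂ → P₁ = P₂ := by
  induction V using Finset.strongInduction with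
  | _ V ih =>
    intro P₁ P₂ h₁ hnc₁ h₂ hnc₂ heq
    by_cases hV : V = ∅
    · subst hV; rw [NPpart_empty h₁, NPpart_empty h₂]
    · set c := NPmins P₁ with hcdef
      obtain ⟨hsupp, hsum, -⟩ := NPdom_of_NPpart h₁
      have hVpos : 0 < V.card := Finset.card_pos.mpr (Finset.nonempty_of_ne_empty hV)
      have hex : ∃ j, c j ≠ 0 := by
        by_contra h
        push_neg at h
        rw [Finset.sum_eq_zero (fun j _ => h j)] at hsum
        omega
      have hS : (univ.filter (fun j => c j ≠ 0)).Nonempty := by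
        obtain ⟨j, hj⟩ := hex; exact ⟨j, mem_filter.mpr ⟨mem_univ _, hj⟩⟩
      set m := (univ.filter (fun j => c j ≠ 0)).max' hS with hm
      have hcm : c m ≠ 0 := (mem_filter.mp ((univ.filter (fun j => c j ≠ 0)).max'_mem hS)).2
      have hmax : ∀ j, c j ≠ 0 → j ≤ m := fun j hj =>
        Finset.le_max' _ j (mem_filter.mpr ⟨mem_univ _, hj⟩)
      have hmV : m ∈ V := hsupp m hcm
      obtain ⟨p₁, hp₁, hmp₁⟩ := exists_block_of_NPmins_ne_zero (P := P₁) hcm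
      have hcm₂ : NPmins P₂ m ≠ 0 := by rwa [← heq]
      obtain ⟨p₂, hp₂, hmp₂⟩ := exists_block_of_NPmins_ne_zero (P := P₂) hcm₂
      have e₁ : p₁ = pBlock V m (c m) := block_at_max h₁ hnc₁ hmax hp₁ hmp₁
      have e₂ : p₂ = pBlock V m (c m) := by
        have := block_at_max h₂ hnc₂ (by rw [← heq]; exact hmax) hp₂ hmp₂
        rwa [← heq] at this
      set B := pBlock V m (c m)
      rw [e₁] at hp₁ hmp₁
      rw [e₂] at hp₂ hmp₂
      obtain ⟨hpart₁, hmins₁⟩ := NPpart_erase h₁ hp₁ hmp₁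
      obtain ⟨hpart₂, hmins₂⟩ := NPpart_erase h₂ hp₂ hmp₂
      have hBne : B.Nonempty := ⟨m, hmp₁.1⟩
      have hBV : B ⊆ V := by
        intro x hx
        exact (mem_filter.mp (pBlock_subset V m (c m) hx)).1
      have hss : V \ B ⊂ V := Finset.sdiff_ssubset hBV hBne
      have := ih (V \ B) hss (P₁.erase B) (P₂.erase B) hpart₁
        (NC_subset (Finset.erase_subset _ _) hnc₁) hpart₂
        (NC_subset (Finset.erase_subset _ _) hnc₂)
        (by rw [hmins₁, hmins₂, ← hcdef, heq])
      have h₁' := Finset.insert_erase hp₁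
      have h₂' := Finset.insert_erase hp₂
      rw [← h₁', ← h₂', this]

lemma NP_surj (V : Finset (Fin k)) : ∀ (c : Fin k → ℕ), NPdom V c →
    ∃ P, NPpart V P ∧ IsNonCrossing k P ∧ NPmins P = c := by
  induction V using Finset.strongInduction with
  | _ V ih =>
    intro c hc
    obtain ⟨hsupp, hsum, hdom⟩ := hc
    by_cases hV : V = ∅
    · subst hV
      refine ⟨∅, ⟨by simp, by simp, by simp⟩, ?_, ?_⟩
      · rintro ⟨a, b, c', d, -, -, -, p, hp, -⟩
        exact absurd hp (Finset.notMem_empty p)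
      · funext j
        rw [NPmins, Finset.filter_empty, Finset.sum_empty]
        by_contra h
        exact absurd (hsupp j (fun h' => h h'.symm)) (Finset.notMem_empty j)
    · have hVpos : 0 < V.card := Finset.card_pos.mpr (Finset.nonempty_of_ne_empty hV)
      have hex : ∃ j, c j ≠ 0 := by
        by_contra h
        push_neg at h
        rw [Finset.sum_eq_zero (fun j _ => h j)] at hsum
        omega
      have hS : (univ.filter (fun j => c j ≠ 0)).Nonempty := by
        obtain ⟨j, hj⟩ := hex; exact ⟨j, mem_filter.mpr ⟨mem_univ _, hj⟩⟩
      set m := (univ.filter (fun j => c j ≠ 0)).max' hS with hm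
      have hcm : c m ≠ 0 := (mem_filter.mp ((univ.filter (fun j => c j ≠ 0)).max'_mem hS)).2
      have hmax : ∀ j, c j ≠ 0 → j ≤ m := fun j hj =>
        Finset.le_max' _ j (mem_filter.mpr ⟨mem_univ _, hj⟩)
      have hmV : m ∈ V := hsupp m hcm
      -- arithmetic to get `c m ≤ W.card`
      have h1 : (V.filter (fun x => x < m)).card + (V.filter (fun x => m ≤ x)).card
          = V.card := by
        have heqf : V.filter (fun x => m ≤ x) = V.filter (fun x => ¬ x < m) :=
          Finset.filter_congr (fun x _ => by simp [not_lt])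
        rw [heqf, Finset.card_filter_add_card_filter_not]
      have h2 : ∑ j ∈ univ.filter (fun j => j < m), c j + c m ≤ ∑ j, c j := by
        rw [← Finset.sum_filter_add_sum_filter_not univ (fun j => j < m) c]
        have hmm : m ∈ univ.filter (fun j => ¬ j < m) := by simp
        have := Finset.single_le_sum (f := c) (fun j _ => Nat.zero_le (c j)) hmm
        omega
      have h3 := hdom m
      have hsle : c m ≤ (V.filter (fun x => m ≤ x)).card := by omega
      set B := pBlock V m (c m) with hBdef
      have hBW := pBlock_subset V m (c m)
      have hBV : B ⊆ V := fun x hx => (mem_filter.mp (hBW hx)).1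
      have hBcard : B.card = c m := pBlock_card hsle
      have hmB : m ∈ B := pBlock_min_mem hmV (by omega)
      have hBne : B.Nonempty := ⟨m, hmB⟩
      have hss : V \ B ⊂ V := Finset.sdiff_ssubset hBV hBne
      set c' := Function.update c m 0 with hc'def
      have hc'm : ∀ j, j ≠ m → c' j = c j := fun j hj => Function.update_of_ne hj 0 c
      have hsum' : ∑ j, c' j + c m = ∑ j, c j := by
        rw [hc'def, Finset.sum_update_of_mem (mem_univ m), Finset.sdiff_singleton_eq_erase]
        rw [← Finset.add_sum_erase univ c (mem_univ m)]
        omega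
      have hcard' : (V \ B).card + c m = V.card := by
        rw [Finset.card_sdiff_of_subset hBV, hBcard]
        have := Finset.card_le_card hBV
        omega
      have hc' : NPdom (V \ B) c' := by
        refine ⟨?_, ?_, ?_⟩
        · intro j hj
          have hjm : j ≠ m := by
            intro h; rw [h, hc'def, Function.update_self] at hj; exact hj rfl
          have hcj : c j ≠ 0 := by rwa [hc'm j hjm] at hj
          have hjltm : j < m := lt_of_le_of_ne (hmax j hcj) hjm
          exact mem_sdiff.mpr ⟨hsupp j hcj,
            fun hjB => absurd (pBlock_ge j hjB) (not_le.mpr hjltm)⟩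
        · omega
        · intro t
          by_cases hmt : m < t
          · have hle : ((V \ B).filter (· < t)).card ≤ (V \ B).card :=
              Finset.card_le_card (Finset.filter_subset _ _)
            have hr : ∑ j ∈ univ.filter (· < t), c' j = ∑ j, c' j := by
              apply Finset.sum_subset (Finset.filter_subset _ _)
              intro j _ hj
              rw [mem_filter, not_and] at hj
              have hjt : ¬ j < t := hj (mem_univ j)
              have hjm : j ≠ m := fun h => hjt (h ▸ hmt)
              rw [hc'm j hjm]
              by_contra hcj
              exact hjt (lt_of_le_of_lt (hmax j hcj) hmt)
            rw [hr]
            omega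
          · have hr : ∑ j ∈ univ.filter (· < t), c' j = ∑ j ∈ univ.filter (· < t), c j := by
              refine Finset.sum_congr rfl fun j hj => ?_
              have hjt : j < t := (mem_filter.mp hj).2
              exact hc'm j (fun h => hmt (h ▸ hjt))
            have hl : ((V \ B).filter (· < t)).card ≤ (V.filter (· < t)).card :=
              Finset.card_le_card (Finset.filter_subset_filter _ Finset.sdiff_subset)
            have := hdom t
            omega
      obtain ⟨P', hP', hnc', hmins'⟩ := ih (V \ B) hss c' hc'
      have hsub' : ∀ q ∈ P', q ⊆ V \ B := by
        intro q hq
        rw [← hP'.2.2]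
        exact Finset.le_sup (f := id) hq
      have hdisjB : ∀ q ∈ P', Disjoint B q := fun q hq =>
        Finset.disjoint_left.mpr fun x hxB hxq => (mem_sdiff.mp (hsub' q hq hxq)).2 hxB
      refine ⟨insert B P', ⟨?_, ?_, ?_⟩, ?_, ?_⟩
      · intro p hp
        rcases mem_insert.mp hp with rfl | hp
        · exact hBne
        · exact hP'.1 p hp
      · intro p hp q hq hpq
        rcases mem_insert.mp hp with rfl | hp <;> rcases mem_insert.mp hq with rfl | hq
        · exact absurd rfl hpq
        · exact hdisjB q hq
        · exact (hdisjB p hp).symm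
        · exact hP'.2.1 p hp q hq hpq
      · rw [Finset.sup_insert, hP'.2.2]
        show B ∪ (V \ B) = V
        exact Finset.union_sdiff_of_subset hBV
      · rintro ⟨x₁, x₂, x₃, x₄, h12, h23, h34, p, hp, q, hq, hpq, hx₁p, hx₃p, hx₂q, hx₄q⟩
        rcases mem_insert.mp hp with rfl | hp' <;> rcases mem_insert.mp hq with rfl | hq'
        · exact hpq rfl
        · have hx₂V : x₂ ∈ V \ B := hsub' q hq' hx₂q
          have hx₂W : x₂ ∈ V.filter (fun x => m ≤ x) := mem_filter.mpr
            ⟨(mem_sdiff.mp hx₂V).1, le_trans (pBlock_ge x₁ hx₁p) (le_of_lt h12)⟩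
          exact (mem_sdiff.mp hx₂V).2 (pBlock_downclosed x₂ hx₂W x₃ hx₃p (le_of_lt h23))
        · have hx₃V : x₃ ∈ V \ B := hsub' p hp' hx₃p
          have hx₃W : x₃ ∈ V.filter (fun x => m ≤ x) := mem_filter.mpr
            ⟨(mem_sdiff.mp hx₃V).1, le_trans (pBlock_ge x₂ hx₂q) (le_of_lt h23)⟩
          exact (mem_sdiff.mp hx₃V).2 (pBlock_downclosed x₃ hx₃W x₄ hx₄q (le_of_lt h34))
        · exact hnc' ⟨x₁, x₂, x₃, x₄, h12, h23, h34, p, hp', q, hq', hpq,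
            hx₁p, hx₃p, hx₂q, hx₄q⟩
      · funext j
        rw [NPmins, Finset.filter_insert]
        by_cases hj : j = m
        · subst hj
          rw [if_pos ⟨hmB, pBlock_ge⟩]
          have hemp : P'.filter (fun q => m ∈ q ∧ ∀ x ∈ q, m ≤ x) = ∅ := by
            refine Finset.filter_eq_empty_iff.mpr fun {q} hq => ?_
            rintro ⟨hjq, -⟩
            exact (mem_sdiff.mp (hsub' q hq hjq)).2 hmB
          rw [hemp, Finset.sum_insert (Finset.notMem_empty B), Finset.sum_empty, hBcard]
          omega
        · rw [if_neg (fun h => hj (le_antisymm (h.2 m hmB) (pBlock_ge j h.1)))]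
          have : NPmins P' j = c' j := by rw [hmins']
          rw [NPmins] at this
          rw [this, hc'm j hj]

lemma NP_content {P : Finset (Finset (Fin k))} {V : Finset (Fin k)} (hP : NPpart V P)
    (s : ℕ) (hs : s ≠ 0) :
    (P.filter (fun p => p.card = s)).card = (univ.filter (fun j => NPmins P j = s)).card := by
  obtain ⟨hne, hd, hsup⟩ := hP
  apply Finset.card_bij (fun p hp => p.min' (hne p (mem_of_mem_filter p hp)))
  · intro p hp
    refine mem_filter.mpr ⟨mem_univ _, ?_⟩
    rw [NPmins_eq_card hd (mem_of_mem_filter p hp)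
      ⟨p.min'_mem _, fun x hx => p.min'_le x hx⟩]
    exact (mem_filter.mp hp).2
  · intro p hp q hq hpq
    by_contra hne'
    have h1 := p.min'_mem (hne p (mem_of_mem_filter p hp))
    have h2 := q.min'_mem (hne q (mem_of_mem_filter q hq))
    rw [hpq] at h1
    exact Finset.disjoint_left.mp
      (hd p (mem_of_mem_filter p hp) q (mem_of_mem_filter q hq) hne') h1 h2
  · intro j hj
    have hj' := (mem_filter.mp hj).2
    have hj0 : NPmins P j ≠ 0 := by rw [hj']; exact hs
    obtain ⟨p, hp, hjp, hjmin⟩ := exists_block_of_NPmins_ne_zero hj0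
    have hcard : p.card = s := by rw [← NPmins_eq_card hd hp ⟨hjp, hjmin⟩, hj']
    refine ⟨p, mem_filter.mpr ⟨hp, hcard⟩, ?_⟩
    exact le_antisymm (p.min'_le j hjp) (hjmin _ (p.min'_mem _))

def Wrot (s : Fin (k+1)) (w : Fin (k+1) → ℕ) : Fin (k+1) → ℕ := fun j => w (s + j)

def Wdom (w : Fin (k+1) → ℕ) : Prop :=
  ∀ t : ℕ, t ≤ k → t ≤ ∑ j ∈ univ.filter (fun j : Fin (k+1) => (j : ℕ) < t), w j

noncomputable def Wps (w : Fin (k+1) → ℕ) : ℕ → ℕ :=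
  fun t => ∑ j ∈ Finset.range t, w ⟨j % (k+1), Nat.mod_lt j (Nat.succ_pos k)⟩

lemma Wps_zero (w : Fin (k+1) → ℕ) : Wps w 0 = 0 := by simp [Wps]

lemma Wps_succ (w : Fin (k+1) → ℕ) (t : ℕ) :
    Wps w (t + 1) = Wps w t + w ⟨t % (k+1), Nat.mod_lt t (Nat.succ_pos k)⟩ :=
  Finset.sum_range_succ _ t

lemma Wps_period (w : Fin (k+1) → ℕ) : Wps w (k+1) = ∑ j, w j := by
  rw [Wps, ← Fin.sum_univ_eq_sum_range
    (fun j => w ⟨j % (k+1), Nat.mod_lt j (Nat.succ_pos k)⟩) (k+1)]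
  refine Finset.sum_congr rfl fun i _ => ?_
  congr 1
  exact Fin.ext (Nat.mod_eq_of_lt i.isLt)

lemma Wps_add_period (w : Fin (k+1) → ℕ) (t : ℕ) :
    Wps w (t + (k+1)) = Wps w t + ∑ j, w j := by
  induction t with
  | zero => rw [Nat.zero_add, Wps_period, Wps_zero, Nat.zero_add]
  | succ t ihh =>
    have : t + 1 + (k + 1) = (t + (k+1)) + 1 := by omega
    rw [this, Wps_succ, ihh, Wps_succ]
    have : (t + (k+1)) % (k+1) = t % (k+1) := Nat.add_mod_right t (k+1)
    simp only [this]
    omega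

lemma Wps_rot (w : Fin (k+1) → ℕ) (s : Fin (k+1)) :
    ∀ u : ℕ, u ≤ k + 1 →
      Wps w ((s : ℕ) + u)
        = Wps w (s : ℕ) + ∑ j ∈ univ.filter (fun j : Fin (k+1) => (j : ℕ) < u), Wrot s w j := by
  intro u
  induction u with
  | zero =>
    intro _
    have : (univ.filter (fun j : Fin (k+1) => (j : ℕ) < 0)) = ∅ := by
      simp
    rw [this, Finset.sum_empty]
    simp
  | succ u ihh =>
    intro hu
    have hu' : u ≤ k + 1 := by omega
    have huk : u < k + 1 := by omega
    have hfil : (univ.filter (fun j : Fin (k+1) => (j : ℕ) < u + 1))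
        = insert (⟨u, huk⟩ : Fin (k+1)) (univ.filter (fun j : Fin (k+1) => (j : ℕ) < u)) := by
      ext j
      simp only [mem_filter, mem_univ, true_and, Finset.mem_insert]
      constructor
      · intro h
        rcases Nat.lt_succ_iff_lt_or_eq.mp h with h | h
        · exact Or.inr h
        · exact Or.inl (Fin.ext h)
      · rintro (rfl | h)
        · simp
        · omega
    rw [hfil, Finset.sum_insert (by simp), show (s : ℕ) + (u + 1) = ((s : ℕ) + u) + 1 by omega,
      Wps_succ, ihh hu']
    simp only [Wrot]
    have : w ⟨((s : ℕ) + u) % (k+1), Nat.mod_lt _ (Nat.succ_pos k)⟩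
        = w (s + ⟨u, huk⟩) := by
      congr 1
    rw [this]
    omega

lemma Wdom_rot_iff (w : Fin (k+1) → ℕ) (s : Fin (k+1)) :
    Wdom (Wrot s w) ↔ ∀ u : ℕ, u ≤ k → Wps w (s : ℕ) + u ≤ Wps w ((s : ℕ) + u) := by
  constructor
  · intro h u hu
    have := h u hu
    rw [Wps_rot w s u (by omega)]
    omega
  · intro h t ht
    have := h t ht
    rw [Wps_rot w s t (by omega)] at this
    omega

lemma cycle_exists_unique (w : Fin (k+1) → ℕ) (hw : ∑ j, w j = k) :
    ∃! s : Fin (k+1), Wdom (Wrot s w) := by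
  have hAne : ((Finset.range (k+1)).image (fun n => (Wps w n : ℤ) - n)).Nonempty := by
    exact ⟨(Wps w 0 : ℤ) - 0, Finset.mem_image.mpr ⟨0, by simp, rfl⟩⟩
  set M := ((Finset.range (k+1)).image (fun n => (Wps w n : ℤ) - n)).min' hAne with hMdef
  have hM : ∀ n, n ≤ k → M ≤ (Wps w n : ℤ) - n := by
    intro n hn
    exact Finset.min'_le _ _ (Finset.mem_image.mpr ⟨n, mem_range.mpr (by omega), rfl⟩)
  have hAmne : ((Finset.range (k+1)).filter (fun n => (Wps w n : ℤ) - n = M)).Nonempty := by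
    obtain ⟨n, hn, hGn⟩ := Finset.mem_image.mp (Finset.min'_mem _ hAne)
    exact ⟨n, mem_filter.mpr ⟨hn, hGn⟩⟩
  set s0 := ((Finset.range (k+1)).filter (fun n => (Wps w n : ℤ) - n = M)).min' hAmne with hs0def
  have hs0mem := Finset.min'_mem _ hAmne
  have hs0k : s0 ≤ k := by
    have := (mem_filter.mp hs0mem).1
    rw [mem_range] at this
    omega
  have hGs0 : (Wps w s0 : ℤ) - s0 = M := (mem_filter.mp hs0mem).2
  have hlt : ∀ v, v < s0 → M + 1 ≤ (Wps w v : ℤ) - v := by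
    intro v hv
    have hvk : v ≤ k := by omega
    have hne : (Wps w v : ℤ) - v ≠ M := by
      intro h
      have hvm : v ∈ (Finset.range (k+1)).filter (fun n => (Wps w n : ℤ) - n = M) :=
        mem_filter.mpr ⟨mem_range.mpr (by omega), h⟩
      have := Finset.min'_le _ _ hvm
      omega
    have := hM v hvk
    omega
  have hs0lt : s0 < k + 1 := by omega
  refine ⟨⟨s0, hs0lt⟩, ?_, ?_⟩
  · dsimp only
    rw [Wdom_rot_iff]
    intro u hu
    rw [show ((⟨s0, hs0lt⟩ : Fin (k+1)) : ℕ) = s0 from rfl]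
    by_cases hcase : s0 + u ≤ k
    · have h1 := hM (s0 + u) hcase
      have h2 : (Wps w (s0 + u) : ℤ) - (s0 + u) ≥ (Wps w s0 : ℤ) - s0 := by omega
      omega
    · have hv : s0 + u - (k+1) < s0 := by omega
      set v := s0 + u - (k+1) with hvdef
      have hveq : v + (k+1) = s0 + u := by omega
      have hB3 : Wps w (v + (k+1)) = Wps w v + k := by rw [Wps_add_period, hw]
      rw [hveq] at hB3
      have := hlt v hv
      omega
  · intro s hs
    rw [Wdom_rot_iff] at hs
    apply Fin.ext
    rw [show ((⟨s0, hs0lt⟩ : Fin (k+1)) : ℕ) = s0 from rfl]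
    by_contra hne
    rcases Nat.lt_or_ge (s : ℕ) s0 with hcase | hcase
    · have hu : 1 ≤ s0 - (s : ℕ) ∧ s0 - (s : ℕ) ≤ k := by omega
      have := hs (s0 - (s : ℕ)) hu.2
      rw [show (s : ℕ) + (s0 - (s : ℕ)) = s0 by omega] at this
      have := hlt (s : ℕ) hcase
      omega
    · have hsk : (s : ℕ) ≤ k := by omega
      have hcase' : s0 < (s : ℕ) := by omega
      have hu : 1 ≤ s0 + (k+1) - (s : ℕ) ∧ s0 + (k+1) - (s : ℕ) ≤ k := by omega
      have hdom := hs (s0 + (k+1) - (s : ℕ)) hu.2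
      rw [show (s : ℕ) + (s0 + (k+1) - (s : ℕ)) = s0 + (k+1) by omega] at hdom
      have hB3 : Wps w (s0 + (k+1)) = Wps w s0 + k := by rw [Wps_add_period, hw]
      have := hM (s : ℕ) hsk
      omega

lemma Wrot_Wrot (s s' : Fin (k+1)) (w : Fin (k+1) → ℕ) :
    Wrot s (Wrot s' w) = Wrot (s' + s) w := by
  funext j; simp [Wrot, add_assoc]

lemma Wrot_zero (w : Fin (k+1) → ℕ) : Wrot 0 w = w := by
  funext j; simp [Wrot]

lemma Wrot_fiber_card (s : Fin (k+1)) (w : Fin (k+1) → ℕ) (v : ℕ) :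
    (univ.filter (fun j => Wrot s w j = v)).card = (univ.filter (fun j => w j = v)).card := by
  apply Finset.card_bij (fun j _ => s + j)
  · intro j hj
    exact mem_filter.mpr ⟨mem_univ _, (mem_filter.mp hj).2⟩
  · intro a _ b _ h
    exact add_left_cancel h
  · intro j hj
    refine ⟨-s + j, mem_filter.mpr ⟨mem_univ _, ?_⟩, by rw [← add_assoc, add_neg_cancel, zero_add]⟩
    show w (s + (-s + j)) = v
    rw [← add_assoc, add_neg_cancel, zero_add]
    exact (mem_filter.mp hj).2

def hasContent (α : Fin k → ℕ) (w : Fin (k+1) → ℕ) : Prop :=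
  (∀ j, w j ≤ k) ∧ ∀ i : Fin k, (univ.filter (fun j => w j = (i : ℕ) + 1)).card = α i

noncomputable def Wfin (α : Fin k → ℕ) : Finset (Fin (k+1) → ℕ) :=
  (Fintype.piFinset fun _ : Fin (k+1) => Finset.range (k+1)).filter (hasContent α)

lemma mem_Wfin {α : Fin k → ℕ} {w : Fin (k+1) → ℕ} : w ∈ Wfin α ↔ hasContent α w := by
  rw [Wfin, mem_filter, Fintype.mem_piFinset]
  constructor
  · exact fun h => h.2
  · intro h
    exact ⟨fun j => mem_range.mpr (by have := h.1 j; omega), h⟩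

lemma sum_of_content {α : Fin k → ℕ} (hα : ∑ i : Fin k, ((i : ℕ) + 1) * α i = k)
    {w : Fin (k+1) → ℕ} (hw : hasContent α w) : ∑ j, w j = k := by
  have h1 : ∑ v ∈ Finset.range (k+1), ∑ j ∈ univ.filter (fun j => w j = v), w j
      = ∑ j, w j :=
    Finset.sum_fiberwise_of_maps_to (fun j _ => mem_range.mpr (by have := hw.1 j; omega)) w
  have h2 : ∀ v : ℕ, ∑ j ∈ univ.filter (fun j => w j = v), w j
      = v * (univ.filter (fun j => w j = v)).card := by
    intro v
    rw [Finset.sum_congr rfl (fun j hj => (mem_filter.mp hj).2), Finset.sum_const,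
      smul_eq_mul, mul_comm]
  rw [← h1]
  simp only [h2]
  rw [Finset.sum_range_succ']
  simp only [Nat.zero_mul, Nat.add_zero]
  rw [← Fin.sum_univ_eq_sum_range
    (fun i => (i + 1) * (univ.filter (fun j : Fin (k+1) => w j = i + 1)).card) k]
  have hcg : ∑ i : Fin k, ((i : ℕ) + 1) * (univ.filter (fun j : Fin (k+1) => w j = (i : ℕ) + 1)).card
      = ∑ i : Fin k, ((i : ℕ) + 1) * α i :=
    Finset.sum_congr rfl fun i _ => by rw [hw.2 i]
  rw [hcg]
  exact hα

noncomputable def Tfin' (α : Fin k → ℕ) : Finset (Fin (k+1) → ℕ) :=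
  (Wfin α).filter (fun w => Wdom w)

lemma card_Wfin (α : Fin k → ℕ) (hα : ∑ i : Fin k, ((i : ℕ) + 1) * α i = k) :
    (Wfin α).card = (k+1) * (Tfin' α).card := by
  have : ((univ : Finset (Fin (k+1))) ×ˢ Tfin' α).card = (k+1) * (Tfin' α).card := by
    rw [Finset.card_product, Finset.card_univ, Fintype.card_fin]
  rw [← this]
  symm
  apply Finset.card_bij (fun p _ => Wrot p.1 p.2)
  · rintro ⟨s, t⟩ hp
    have ht : t ∈ Tfin' α := (Finset.mem_product.mp hp).2
    have htW := mem_Wfin.mp (mem_of_mem_filter t ht)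
    refine mem_Wfin.mpr ⟨fun j => htW.1 _, fun i => ?_⟩
    rw [Wrot_fiber_card]
    exact htW.2 i
  · rintro ⟨s₁, t₁⟩ hp₁ ⟨s₂, t₂⟩ hp₂ heq
    have ht₁ : t₁ ∈ Tfin' α := (Finset.mem_product.mp hp₁).2
    have ht₂ : t₂ ∈ Tfin' α := (Finset.mem_product.mp hp₂).2
    have hdom₁ : Wdom t₁ := (mem_filter.mp ht₁).2
    have hdom₂ : Wdom t₂ := (mem_filter.mp ht₂).2
    have hsum₁ : ∑ j, t₁ j = k := sum_of_content hα (mem_Wfin.mp (mem_of_mem_filter t₁ ht₁))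
    simp only at heq
    have ht₂eq : t₂ = Wrot (s₁ + -s₂) t₁ := by
      rw [← Wrot_Wrot]
      rw [heq, Wrot_Wrot, add_neg_cancel, Wrot_zero]
    obtain ⟨sstar, -, huniq⟩ := cycle_exists_unique t₁ hsum₁
    have h0 : sstar = 0 := (huniq 0 (show Wdom (Wrot 0 t₁) by rwa [Wrot_zero])).symm
    have h1 : sstar = s₁ + -s₂ :=
      (huniq (s₁ + -s₂) (show Wdom (Wrot (s₁ + -s₂) t₁) by rwa [← ht₂eq])).symm
    have hseq : s₁ = s₂ := by
      have : s₁ + -s₂ = 0 := by rw [← h1, h0]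
      have := add_eq_zero_iff_eq_neg.mp this
      rwa [neg_neg] at this
    have hteq : t₁ = t₂ := by rw [ht₂eq, ← hseq, add_neg_cancel, Wrot_zero]
    exact Prod.ext hseq hteq
  · intro w hw
    have hsum : ∑ j, w j = k := sum_of_content hα (mem_Wfin.mp hw)
    obtain ⟨s, hs, -⟩ := cycle_exists_unique w hsum
    refine ⟨(-s, Wrot s w), Finset.mem_product.mpr ⟨mem_univ _, ?_⟩, ?_⟩
    · refine mem_filter.mpr ⟨?_, hs⟩
      have hwc := mem_Wfin.mp hw
      refine mem_Wfin.mpr ⟨fun j => hwc.1 _, fun i => ?_⟩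
      rw [Wrot_fiber_card]
      exact hwc.2 i
    · show Wrot (-s) (Wrot s w) = w
      rw [Wrot_Wrot, add_neg_cancel, Wrot_zero]

noncomputable def NPemb (α : Fin k → ℕ) (ι : (Σ i : Fin k, Fin (α i)) ↪ Fin (k+1)) :
    Fin (k+1) → ℕ :=
  fun j => if h : ∃ s, ι s = j then ((Classical.choose h).1 : ℕ) + 1 else 0

lemma NPemb_apply (α : Fin k → ℕ) (ι : (Σ i : Fin k, Fin (α i)) ↪ Fin (k+1))
    (s : Σ i : Fin k, Fin (α i)) : NPemb α ι (ι s) = (s.1 : ℕ) + 1 := by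
  have h : ∃ s', ι s' = ι s := ⟨s, rfl⟩
  rw [NPemb, dif_pos h]
  have := Classical.choose_spec h
  have hcs : Classical.choose h = s := ι.injective this
  rw [hcs]

lemma NPemb_eq_iff (α : Fin k → ℕ) (ι : (Σ i : Fin k, Fin (α i)) ↪ Fin (k+1))
    (j : Fin (k+1)) (i : Fin k) :
    NPemb α ι j = (i : ℕ) + 1 ↔ ∃ t : Fin (α i), ι ⟨i, t⟩ = j := by
  constructor
  · intro h
    by_cases hex : ∃ s, ι s = j
    · rw [NPemb, dif_pos hex] at h
      have hs₀ : ι (Classical.choose hex) = j := Classical.choose_spec hex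
      have hi : (Classical.choose hex).1 = i := Fin.ext (by omega)
      subst hi
      exact ⟨(Classical.choose hex).2, hs₀⟩
    · rw [NPemb, dif_neg hex] at h
      omega
  · rintro ⟨t, rfl⟩
    exact NPemb_apply α ι ⟨i, t⟩

lemma NPemb_mem_Wfin (α : Fin k → ℕ) (ι : (Σ i : Fin k, Fin (α i)) ↪ Fin (k+1)) :
    NPemb α ι ∈ Wfin α := by
  refine mem_Wfin.mpr ⟨?_, ?_⟩
  · intro j
    rw [NPemb]
    by_cases hex : ∃ s, ι s = j
    · rw [dif_pos hex]
      have := ((Classical.choose hex).1).isLt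
      omega
    · rw [dif_neg hex]
      omega
  · intro i
    rw [show α i = Fintype.card (Fin (α i)) from (Fintype.card_fin _).symm,
      ← Finset.card_univ]
    symm
    apply Finset.card_bij (fun t _ => ι ⟨i, t⟩)
    · intro t _
      exact mem_filter.mpr ⟨mem_univ _, NPemb_apply α ι ⟨i, t⟩⟩
    · intro t₁ _ t₂ _ h
      have h2 := ι.injective h
      injection h2 with h3 h4
    · intro j hj
      obtain ⟨t, ht⟩ := (NPemb_eq_iff α ι j i).mp (mem_filter.mp hj).2
      exact ⟨t, mem_univ _, ht⟩

lemma NPemb_eq_of (α : Fin k → ℕ) (w : Fin (k+1) → ℕ)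
    (ι : (Σ i : Fin k, Fin (α i)) ↪ Fin (k+1))
    (h1 : ∀ s, w (ι s) = (s.1 : ℕ) + 1) (h2 : ∀ j, w j ≠ 0 → ∃ s, ι s = j) :
    NPemb α ι = w := by
  funext j
  by_cases hex : ∃ s, ι s = j
  · rw [NPemb, dif_pos hex]
    have hs := Classical.choose_spec hex
    have := h1 (Classical.choose hex)
    rw [hs] at this
    exact this.symm
  · rw [NPemb, dif_neg hex]
    by_contra hwj
    exact hex (h2 j fun h => hwj h.symm)

noncomputable def fiberEquiv (α : Fin k → ℕ) (w : Fin (k+1) → ℕ) (hw : w ∈ Wfin α) :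
    {ι : (Σ i : Fin k, Fin (α i)) ↪ Fin (k+1) // NPemb α ι = w}
      ≃ (∀ i : Fin k, Fin (α i) ↪ {j : Fin (k+1) // w j = (i : ℕ) + 1}) where
  toFun p := fun i =>
    ⟨fun t => ⟨p.1 ⟨i, t⟩, by
        have := NPemb_apply α p.1 ⟨i, t⟩
        rwa [p.2] at this⟩,
     by
       intro t₁ t₂ h
       have hval := congrArg Subtype.val h
       have h2 := p.1.injective hval
       injection h2 with h3 h4⟩
  invFun g :=
    ⟨⟨fun s => (g s.1 s.2).1, by
        rintro ⟨i₁, t₁⟩ ⟨i₂, t₂⟩ h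
        have hw₁ := (g i₁ t₁).2
        have hw₂ := (g i₂ t₂).2
        have hcong : w ((g i₁ t₁) : Fin (k+1)) = w ((g i₂ t₂) : Fin (k+1)) := congrArg w h
        have hi : i₁ = i₂ := by
          apply Fin.ext
          rw [hw₁, hw₂] at hcong
          omega
        subst hi
        have ht : t₁ = t₂ := (g i₁).injective (Subtype.ext h)
        rw [ht]⟩, by
      apply NPemb_eq_of
      · rintro ⟨i, t⟩
        exact (g i t).2
      · intro j hpos
        have hwjk := (mem_Wfin.mp hw).1 j
        have hwjpos : 0 < w j := Nat.pos_of_ne_zero hpos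
        set i : Fin k := ⟨w j - 1, by omega⟩ with hidef
        have hwi : w j = (i : ℕ) + 1 := by
          rw [hidef]
          simp only
          omega
        have hcard : Fintype.card (Fin (α i))
            = Fintype.card {j : Fin (k+1) // w j = (i : ℕ) + 1} := by
          rw [Fintype.card_fin, Fintype.card_subtype, (mem_Wfin.mp hw).2 i]
        have hbij : Function.Bijective (g i) :=
          (Fintype.bijective_iff_injective_and_card (g i)).mpr ⟨(g i).injective, hcard⟩
        obtain ⟨t, ht⟩ := hbij.2 ⟨j, hwi⟩
        exact ⟨⟨i, t⟩, congrArg Subtype.val ht⟩⟩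
  left_inv p := Subtype.ext (DFunLike.ext _ _ fun s => rfl)
  right_inv g := funext fun i => DFunLike.ext _ _ fun t => Subtype.ext rfl

lemma card_fiber (α : Fin k → ℕ) (w : Fin (k+1) → ℕ) (hw : w ∈ Wfin α) :
    (univ.filter (fun ι : (Σ i : Fin k, Fin (α i)) ↪ Fin (k+1) => NPemb α ι = w)).card
      = ∏ i, (α i).factorial := by
  rw [← Fintype.card_subtype]
  rw [Fintype.card_congr (fiberEquiv α w hw), Fintype.card_pi]
  refine Finset.prod_congr rfl fun i _ => ?_
  rw [Fintype.card_embedding_eq, Fintype.card_fin, Fintype.card_subtype,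
    (mem_Wfin.mp hw).2 i, Nat.descFactorial_self]

lemma Wfin_card_mul (α : Fin k → ℕ) :
    (Wfin α).card * ∏ i, (α i).factorial = (k+1).descFactorial (∑ i, α i) := by
  have h1 : (univ : Finset ((Σ i : Fin k, Fin (α i)) ↪ Fin (k+1))).card
      = ∑ w ∈ Wfin α, (univ.filter (fun ι => NPemb α ι = w)).card :=
    Finset.card_eq_sum_card_fiberwise (fun ι _ => NPemb_mem_Wfin α ι)
  rw [Finset.sum_congr rfl (fun w hw => card_fiber α w hw), Finset.sum_const,
    smul_eq_mul] at h1
  rw [← h1, Finset.card_univ, Fintype.card_embedding_eq, Fintype.card_fin,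
    Fintype.card_sigma]
  congr 1
  exact Finset.sum_congr rfl fun i _ => Fintype.card_fin _

noncomputable def ew (c : Fin k → ℕ) : Fin (k+1) → ℕ :=
  fun j => if h : (j : ℕ) < k then c ⟨j, h⟩ else 0

lemma ew_castSucc (c : Fin k → ℕ) (j : Fin k) : ew c (Fin.castSucc j) = c j := by
  rw [ew, dif_pos (by simp)]
  congr 1

lemma ew_fiber (c : Fin k → ℕ) (v : ℕ) (hv : v ≠ 0) :
    (univ.filter (fun j : Fin (k+1) => ew c j = v)).card
      = (univ.filter (fun j : Fin k => c j = v)).card := by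
  symm
  apply Finset.card_bij (fun j _ => Fin.castSucc j)
  · intro j hj
    refine mem_filter.mpr ⟨mem_univ _, ?_⟩
    rw [ew_castSucc]
    exact (mem_filter.mp hj).2
  · intro j₁ _ j₂ _ h
    exact Fin.castSucc_injective k h
  · intro j hj
    have hjv := (mem_filter.mp hj).2
    have hjk : (j : ℕ) < k := by
      by_contra hc
      rw [ew, dif_neg hc] at hjv
      exact hv hjv.symm
    refine ⟨⟨j, hjk⟩, mem_filter.mpr ⟨mem_univ _, ?_⟩, Fin.ext (by simp)⟩
    rw [← hjv, ew]
    rw [dif_pos hjk]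

lemma ew_prefix_sum (c : Fin k → ℕ) (t : ℕ) :
    ∑ j ∈ univ.filter (fun j : Fin (k+1) => (j : ℕ) < t ∧ (j : ℕ) < k), ew c j
      = ∑ j ∈ univ.filter (fun j : Fin k => (j : ℕ) < t), c j := by
  symm
  apply Finset.sum_bij (fun (j : Fin k) _ => Fin.castSucc j)
  · intro j hj
    refine mem_filter.mpr ⟨mem_univ _, ?_⟩
    simp only [Fin.coe_castSucc]
    exact ⟨(mem_filter.mp hj).2, j.isLt⟩
  · intro j₁ _ j₂ _ h
    exact Fin.castSucc_injective k h
  · intro j hj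
    obtain ⟨-, hjt, hjk⟩ := mem_filter.mp hj
    exact ⟨⟨j, by simpa using hjk⟩, mem_filter.mpr ⟨mem_univ _, by simpa using hjt⟩,
      Fin.ext (by simp)⟩
  · intro j _
    exact (ew_castSucc c j).symm

lemma ew_prefix_sum' (c : Fin k → ℕ) (t : ℕ) (ht : t ≤ k) :
    ∑ j ∈ univ.filter (fun j : Fin (k+1) => (j : ℕ) < t), ew c j
      = ∑ j ∈ univ.filter (fun j : Fin k => (j : ℕ) < t), c j := by
  calc ∑ j ∈ univ.filter (fun j : Fin (k+1) => (j : ℕ) < t), ew c j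
      = ∑ j ∈ univ.filter (fun j : Fin (k+1) => (j : ℕ) < t ∧ (j : ℕ) < k), ew c j := by
        apply Finset.sum_congr _ (fun _ _ => rfl)
        apply Finset.filter_congr
        intro j _
        constructor
        · intro h; exact ⟨h, by omega⟩
        · exact fun h => h.1
    _ = ∑ j ∈ univ.filter (fun j : Fin k => (j : ℕ) < t), c j := ew_prefix_sum c t

lemma ew_total (c : Fin k → ℕ) : ∑ j, ew c j = ∑ j, c j := by
  rw [Fin.sum_univ_castSucc]
  have hlast : ew c (Fin.last k) = 0 := by
    rw [ew, dif_neg (by simp)]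
  rw [hlast, Nat.add_zero]
  exact Finset.sum_congr rfl fun j _ => ew_castSucc c j

noncomputable def Tfin (α : Fin k → ℕ) : Finset (Fin k → ℕ) :=
  (Fintype.piFinset fun _ : Fin k => Finset.range (k+1)).filter
    (fun c => NPdom univ c ∧
      ∀ i : Fin k, (univ.filter (fun j => c j = (i : ℕ) + 1)).card = α i)

lemma filter_lt_fin_eq (t : Fin k) :
    (univ.filter (fun x : Fin k => x < t)) = (univ.filter (fun x : Fin k => (x : ℕ) < (t : ℕ))) := by
  apply Finset.filter_congr
  intro x _
  exact Iff.rfl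

lemma sum_filter_lt_k (w : Fin (k+1) → ℕ) :
    ∑ j ∈ univ.filter (fun j : Fin (k+1) => (j : ℕ) < k), w j
      = ∑ j : Fin k, w (Fin.castSucc j) := by
  symm
  apply Finset.sum_bij (fun (j : Fin k) _ => Fin.castSucc j)
  · intro j _
    exact mem_filter.mpr ⟨mem_univ _, by simpa using j.isLt⟩
  · intro j₁ _ j₂ _ h
    exact Fin.castSucc_injective k h
  · intro j hj
    have hjk : (j : ℕ) < k := (mem_filter.mp hj).2
    exact ⟨⟨j, hjk⟩, mem_univ _, Fin.ext (by simp)⟩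
  · intros; rfl

lemma mem_Tfin {α : Fin k → ℕ} {c : Fin k → ℕ} :
    c ∈ Tfin α ↔ (∀ j, c j ≤ k) ∧ NPdom univ c ∧
      ∀ i : Fin k, (univ.filter (fun j => c j = (i : ℕ) + 1)).card = α i := by
  rw [Tfin, mem_filter, Fintype.mem_piFinset]
  simp only [mem_range]
  constructor
  · rintro ⟨h1, h2⟩
    exact ⟨fun j => by have := h1 j; omega, h2⟩
  · rintro ⟨h1, h2⟩
    exact ⟨fun j => by have := h1 j; omega, h2⟩

lemma card_Tfin (α : Fin k → ℕ) (hα : ∑ i : Fin k, ((i : ℕ) + 1) * α i = k) :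
    (Tfin α).card = (Tfin' α).card := by
  apply Finset.card_bij (fun c _ => ew c)
  · intro c hc
    obtain ⟨hbd, ⟨hsupp, hsum, hdom⟩, hcont⟩ := mem_Tfin.mp hc
    have hsumk : ∑ j, c j = k := by rw [hsum, Finset.card_univ, Fintype.card_fin]
    refine mem_filter.mpr ⟨mem_Wfin.mpr ⟨?_, ?_⟩, ?_⟩
    · intro j
      rw [ew]
      split
      · exact hbd _
      · omega
    · intro i
      rw [ew_fiber c _ (by omega)]
      exact hcont i
    · intro t ht
      rw [ew_prefix_sum' c t ht]
      rcases Nat.lt_or_ge t k with htk | htk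
      · have hd := hdom ⟨t, htk⟩
        rw [filter_lt_fin_eq, card_filter_val_lt k t (by omega)] at hd
        exact le_trans hd (le_of_eq (Finset.sum_congr (filter_lt_fin_eq ⟨t, htk⟩) (fun _ _ => rfl)))
      · have huniv : (univ.filter (fun j : Fin k => (j : ℕ) < t)) = univ :=
          Finset.filter_true_of_mem fun j _ => by have := j.isLt; omega
        rw [huniv, hsumk]
        omega
  · intro c₁ h₁ c₂ h₂ h
    funext j
    have := congrFun h (Fin.castSucc j)
    rwa [ew_castSucc, ew_castSucc] at this
  · intro w hw
    have hwW : w ∈ Wfin α := mem_of_mem_filter w hw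
    have hwdom : Wdom w := (mem_filter.mp hw).2
    have hwc := mem_Wfin.mp hwW
    have hsumw : ∑ j, w j = k := sum_of_content hα hwc
    set c : Fin k → ℕ := fun j => w (Fin.castSucc j) with hcdef
    have hsplit : ∑ j, w j
        = ∑ j ∈ univ.filter (fun j : Fin (k+1) => (j : ℕ) < k), w j + w (Fin.last k) := by
      rw [Fin.sum_univ_castSucc, sum_filter_lt_k]
    have hdomk := hwdom k (le_refl k)
    have hlast : w (Fin.last k) = 0 := by omega
    have hew : ew c = w := by
      funext j
      rw [ew]
      split
      · next h =>
        exact congrArg w (Fin.ext rfl)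
      · next h =>
        have hj := j.isLt
        rw [show j = Fin.last k from Fin.ext (by simp only [Fin.val_last]; omega)]
        exact hlast.symm
    refine ⟨c, mem_Tfin.mpr ⟨?_, ⟨?_, ?_, ?_⟩, ?_⟩, hew⟩
    · intro j
      exact hwc.1 _
    · intro j _
      exact mem_univ j
    · rw [← ew_total c, hew, hsumw, Finset.card_univ, Fintype.card_fin]
    · intro t
      rw [filter_lt_fin_eq, card_filter_val_lt k (t : ℕ) (le_of_lt t.isLt)]
      have hd := hwdom (t : ℕ) (le_of_lt t.isLt)
      rw [← hew, ew_prefix_sum' c (t : ℕ) (le_of_lt t.isLt)] at hd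
      exact le_trans hd (le_of_eq (Finset.sum_congr (filter_lt_fin_eq t).symm (fun _ _ => rfl)))
    · intro i
      rw [← ew_fiber c _ (Nat.succ_ne_zero _), hew]
      exact hwc.2 i

/-- Kreweras: the number of non-crossing partitions of `[k]` with exactly `α i`
parts of size `i+1` equals `C(k, a-1) · (a-1)! / (α_1!⋯α_k!)`. -/
theorem stmt2 (k : ℕ) (hk : 0 < k) (α : Fin k → ℕ)
    (hα : ∑ i : Fin k, ((i : ℕ) + 1) * α i = k) (a : ℕ) (ha : a = ∑ i, α i) :
    (Finset.univ.filter (fun P : Finset (Finset (Fin k)) =>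
        IsPartitionOf k P ∧ IsNonCrossing k P ∧
        ∀ i : Fin k, (P.filter (fun p : Finset (Fin k) => p.card = (i : ℕ) + 1)).card = α i)).card
      * ∏ i, (α i).factorial
    = Nat.choose k (a - 1) * (a - 1).factorial := by
  have hScard : (Finset.univ.filter (fun P : Finset (Finset (Fin k)) =>
      IsPartitionOf k P ∧ IsNonCrossing k P ∧
      ∀ i : Fin k, (P.filter (fun p : Finset (Fin k) => p.card = (i : ℕ) + 1)).card = α i)).card
      = (Tfin α).card := by
    apply Finset.card_bij (fun P _ => NPmins P)
    · intro P hP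
      obtain ⟨-, hpart, hnc, hcont⟩ := mem_filter.mp hP
      have hpart' : NPpart univ P := hpart
      have hdomP := NPdom_of_NPpart hpart'
      refine mem_Tfin.mpr ⟨?_, hdomP, ?_⟩
      · intro j
        have hs := hdomP.2.1
        have hle := Finset.single_le_sum (f := NPmins P) (fun j _ => Nat.zero_le _) (mem_univ j)
        rw [hs, Finset.card_univ, Fintype.card_fin] at hle
        exact hle
      · intro i
        rw [← NP_content hpart' ((i : ℕ) + 1) (Nat.succ_ne_zero _)]
        exact hcont i
    · intro P₁ h₁ P₂ h₂ heq
      obtain ⟨-, hpart₁, hnc₁, -⟩ := mem_filter.mp h₁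
      obtain ⟨-, hpart₂, hnc₂, -⟩ := mem_filter.mp h₂
      exact NP_inj univ P₁ P₂ hpart₁ hnc₁ hpart₂ hnc₂ heq
    · intro c hc
      obtain ⟨hbd, hdom, hcont⟩ := mem_Tfin.mp hc
      obtain ⟨P, hpart, hnc, hmins⟩ := NP_surj univ c hdom
      refine ⟨P, mem_filter.mpr ⟨mem_univ _, hpart, hnc, ?_⟩, hmins⟩
      intro i
      rw [NP_content hpart ((i : ℕ) + 1) (Nat.succ_ne_zero _), hmins]
      exact hcont i
  have h2 := card_Tfin α hα
  have h3 := card_Wfin α hα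
  have h4 := Wfin_card_mul α
  rw [← ha] at h4
  have ha1 : 1 ≤ a := by
    by_contra h
    have ha0 : ∀ i, α i = 0 := by
      intro i
      have := Finset.single_le_sum (f := α) (fun i _ => Nat.zero_le _) (mem_univ i)
      omega
    rw [Finset.sum_eq_zero (fun i _ => by rw [ha0 i, Nat.mul_zero])] at hα
    omega
  obtain ⟨b, hb⟩ : ∃ b, a = b + 1 := ⟨a - 1, by omega⟩
  have h5 : (k+1).descFactorial a = (k+1) * Nat.descFactorial k b := by
    rw [hb]
    exact Nat.succ_descFactorial_succ k b
  have hkey : (k+1) * ((Tfin' α).card * ∏ i, (α i).factorial)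
      = (k+1) * Nat.descFactorial k b := by
    rw [← h5, ← h4, h3]
    ring
  have h6 : (Tfin' α).card * ∏ i, (α i).factorial = Nat.descFactorial k b :=
    Nat.eq_of_mul_eq_mul_left (Nat.succ_pos k) hkey
  rw [hScard, h2, h6, show a - 1 = b by omega, Nat.descFactorial_eq_factorial_mul_choose]
  ring
end

section
/- For positive integers s ≤ k, the sum over all compositions (i_1,...,i_s) of k into s positive parts of the product C_{i_1-1}⋯C_{i_s-1} of Catalan numbers equals s·(2k-s-1)!/((k-s)!·k!). -/
open Finset PowerSeries

noncomputable def catPS : PowerSeries ℕ := PowerSeries.mk catalan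

lemma catPS_eq : catPS = 1 + PowerSeries.X * catPS ^ 2 := by
  ext n
  cases n with
  | zero => simp [catPS]
  | succ n =>
    rw [map_add, coeff_succ_X_mul]
    simp [catPS, sq, PowerSeries.coeff_mul, catalan_succ']

noncomputable def Q (s m : ℕ) : ℕ := PowerSeries.coeff m (catPS ^ s)

lemma Q_one (m : ℕ) : Q 1 m = catalan m := by simp [Q, catPS]

lemma Q_two (m : ℕ) : Q 2 m = catalan (m + 1) := by
  have h : (PowerSeries.coeff (m+1)) catPS
      = (PowerSeries.coeff (m+1)) (1 + PowerSeries.X * catPS ^ 2) := by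
    rw [← catPS_eq]
  rw [map_add, coeff_succ_X_mul] at h
  simpa [Q, catPS] using h.symm

lemma Q_rec (s m : ℕ) : Q (s + 1) (m + 1) = Q s (m + 1) + Q (s + 2) m := by
  have h : catPS ^ (s + 1) = catPS ^ s + PowerSeries.X * catPS ^ (s + 2) := by
    have : catPS ^ (s+1) = catPS ^ s * (1 + PowerSeries.X * catPS ^ 2) := by
      rw [← catPS_eq, pow_succ]
    rw [this]; ring
  unfold Q
  rw [h, map_add, coeff_succ_X_mul]

lemma Rlem (s : ℕ) : ∀ m : ℕ, Q (s + 1) m * (m.factorial * (m + s + 1).factorial)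
    = (s + 1) * (2 * m + s).factorial := by
  induction s using Nat.strong_induction_on with
  | _ s ih =>
    match s with
    | 0 =>
      intro m
      have hc : (2*m).choose m * m.factorial * (2*m - m).factorial
          = (2*m).factorial := Nat.choose_mul_factorial_mul_factorial (by omega)
      rw [show 2*m - m = m by omega] at hc
      have hcb : (m + 1) * catalan m = m.centralBinom :=
        succ_mul_catalan_eq_centralBinom m
      have hcb2 : m.centralBinom = (2*m).choose m := rfl
      calc Q 1 m * (m.factorial * (m + 0 + 1).factorial)
          = ((m+1) * catalan m) * (m.factorial * m.factorial) := by
            rw [Q_one, Nat.add_zero, Nat.factorial_succ m]; ring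
        _ = (2*m).choose m * m.factorial * m.factorial := by rw [hcb, hcb2]; ring
        _ = (2*m).factorial := hc
        _ = (0 + 1) * (2*m + 0).factorial := by ring_nf
    | 1 =>
      intro m
      apply Nat.eq_of_mul_eq_mul_left (show 0 < m + 1 by omega)
      have hcb : (m + 2) * catalan (m+1) = (m+1).centralBinom :=
        succ_mul_catalan_eq_centralBinom (m+1)
      have hcb2 : (m+1).centralBinom = (2*(m+1)).choose (m+1) := rfl
      have hc : (2*(m+1)).choose (m+1) * (m+1).factorial * (2*(m+1) - (m+1)).factorial
          = (2*(m+1)).factorial := Nat.choose_mul_factorial_mul_factorial (by omega)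
      rw [show 2*(m+1) - (m+1) = m+1 by omega] at hc
      calc (m+1) * (Q 2 m * (m.factorial * (m + 1 + 1).factorial))
          = ((m+2) * catalan (m+1)) * ((m+1).factorial * (m+1).factorial) := by
            rw [Q_two, Nat.factorial_succ (m+1), Nat.factorial_succ m]; ring
        _ = (2*(m+1)).choose (m+1) * (m+1).factorial * (m+1).factorial := by
            rw [hcb, hcb2]; ring
        _ = (2*(m+1)).factorial := hc
        _ = (2*(m+1)) * (2*m+1).factorial := by
            rw [show 2*(m+1) = (2*m+1)+1 by omega, Nat.factorial_succ]
        _ = (m+1) * ((1 + 1) * (2*m + 1).factorial) := by ring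
    | (t+2) =>
      intro m
      have IH1 := ih (t+1) (by omega) (m+1)
      have IH0 := ih t (by omega) (m+1)
      have hrec := Q_rec (t+1) m
      -- abbreviations
      set A := Q (t + 3) m with hA
      set B := Q (t + 2) (m + 1) with hB
      set D := Q (t + 1) (m + 1) with hD
      -- hrec : B = D + A
      apply Nat.eq_of_mul_eq_mul_left (show 0 < m + 1 by omega)
      -- normalize index arithmetic in IH1, IH0
      have IH1' : B * ((m+1).factorial * (m+t+3).factorial)
          = (t+2) * (2*m+t+3).factorial := by
        have e : m + 1 + (t+1) + 1 = m + t + 3 := by omega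
        have e2 : 2*(m+1) + (t+1) = 2*m+t+3 := by omega
        rw [e, e2] at IH1; exact IH1
      have IH0' : D * ((m+1).factorial * (m+t+2).factorial)
          = (t+1) * (2*m+t+2).factorial := by
        have e : m + 1 + t + 1 = m + t + 2 := by omega
        have e2 : 2*(m+1) + t = 2*m+t+2 := by omega
        rw [e, e2] at IH0; exact IH0
      have egoal : m + (t+2) + 1 = m + t + 3 := by omega
      have egoal2 : 2*m + (t+2) = 2*m+t+2 := by omega
      rw [egoal, egoal2]
      -- key computation
      have key : A * ((m+1).factorial * (m+t+3).factorial)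
          + (t+1) * (m+t+3) * (2*m+t+2).factorial
          = (t+2) * (2*m+t+3) * (2*m+t+2).factorial := by
        have hf : (m+t+3).factorial = (m+t+3) * (m+t+2).factorial := by
          rw [show m+t+3 = (m+t+2)+1 by omega, Nat.factorial_succ]
        have hg : (2*m+t+3).factorial = (2*m+t+3) * (2*m+t+2).factorial := by
          rw [show 2*m+t+3 = (2*m+t+2)+1 by omega, Nat.factorial_succ]
        calc A * ((m+1).factorial * (m+t+3).factorial)
              + (t+1) * (m+t+3) * (2*m+t+2).factorial
            = A * ((m+1).factorial * (m+t+3).factorial)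
              + (m+t+3) * (D * ((m+1).factorial * (m+t+2).factorial)) := by
                rw [IH0']; ring
          _ = (D + A) * ((m+1).factorial * (m+t+3).factorial) := by
                rw [hf]; ring
          _ = (t+2) * (2*m+t+3).factorial := by rw [← hrec, IH1']
          _ = (t+2) * (2*m+t+3) * (2*m+t+2).factorial := by rw [hg]; ring
      have key2 : A * ((m+1).factorial * (m+t+3).factorial)
          = (m+1) * (t+3) * (2*m+t+2).factorial := by
        have h2 : (t+2) * (2*m+t+3) * (2*m+t+2).factorial
            = (t+1) * (m+t+3) * (2*m+t+2).factorial
              + (m+1) * (t+3) * (2*m+t+2).factorial := by ring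
        omega
      calc (m+1) * (A * (m.factorial * (m+t+3).factorial))
          = A * ((m+1).factorial * (m+t+3).factorial) := by
            rw [Nat.factorial_succ m]; ring
        _ = (m+1) * (t+3) * (2*m+t+2).factorial := key2
        _ = (m+1) * ((t+2+1) * (2*m+t+2).factorial) := by ring

lemma coeff_pow_tuple (φ : PowerSeries ℕ) (s k : ℕ) :
    PowerSeries.coeff k (φ ^ s)
      = ∑ i ∈ Finset.Nat.antidiagonalTuple s k, ∏ j : Fin s, PowerSeries.coeff (i j) φ := by
  rw [show φ ^ s = ∏ _j : Fin s, φ by simp, PowerSeries.coeff_prod]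
  refine Finset.sum_nbij' (fun l => ⇑l) (fun f => Finsupp.equivFunOnFinite.symm f) ?_ ?_ ?_ ?_ ?_
  · intro l hl
    rw [Finset.mem_finsuppAntidiag] at hl
    rw [Finset.Nat.mem_antidiagonalTuple]
    simpa using hl.1
  · intro f hf
    rw [Finset.Nat.mem_antidiagonalTuple] at hf
    rw [Finset.mem_finsuppAntidiag]
    constructor
    · simpa using hf
    · exact Finset.subset_univ _
  · intro l _; exact Finsupp.ext fun a => by simp
  · intro f _; ext a; simp
  · intro l _; rfl

lemma sum_eq_coeff (s k : ℕ) :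
    (∑ i ∈ (Finset.Nat.antidiagonalTuple s k).filter (fun i => ∀ j, 0 < i j),
        ∏ j : Fin s, catalan (i j - 1))
      = PowerSeries.coeff k ((PowerSeries.X * catPS) ^ s) := by
  have hX : ∀ n : ℕ, PowerSeries.coeff n (PowerSeries.X * catPS)
      = if n = 0 then 0 else catalan (n - 1) := by
    intro n
    cases n with
    | zero => simp
    | succ n => rw [PowerSeries.coeff_succ_X_mul]; simp [catPS]
  rw [coeff_pow_tuple, Finset.sum_filter]
  apply Finset.sum_congr rfl
  intro i _
  by_cases h : ∀ j, 0 < i j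
  · rw [if_pos h]
    apply Finset.prod_congr rfl
    intro j _
    rw [hX, if_neg (Nat.pos_iff_ne_zero.mp (h j))]
  · rw [if_neg h]
    push_neg at h
    obtain ⟨j, hj⟩ := h
    refine (Finset.prod_eq_zero (Finset.mem_univ j) ?_).symm
    rw [hX, if_pos (Nat.le_zero.mp hj)]

/-- Sum over compositions of `k` into `s` positive parts of products of Catalan
numbers: `∑ C_{i₁-1}⋯C_{i_s-1} = s·(2k-s-1)!/((k-s)!·k!)`. -/
theorem stmt7 (s k : ℕ) (hs : 1 ≤ s) (hsk : s ≤ k) :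
    (∑ i ∈ (Finset.Nat.antidiagonalTuple s k).filter (fun i => ∀ j, 0 < i j),
        ∏ j : Fin s, catalan (i j - 1))
      * ((k - s).factorial * k.factorial)
    = s * (2 * k - s - 1).factorial := by
  have hk : k = (k - s) + s := by omega
  have hcoeff : PowerSeries.coeff k ((PowerSeries.X * catPS) ^ s)
      = Q s (k - s) := by
    unfold Q
    conv_lhs => rw [mul_pow, hk]
    exact PowerSeries.coeff_X_pow_mul (catPS ^ s) s (k - s)
  rw [sum_eq_coeff, hcoeff]
  obtain ⟨t, rfl⟩ : ∃ t, s = t + 1 := ⟨s - 1, by omega⟩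
  have R := Rlem t (k - (t+1))
  have e1 : k - (t+1) + t + 1 = k := by omega
  have e2 : 2 * (k - (t+1)) + t = 2*k - (t+1) - 1 := by omega
  rw [e1, e2] at R
  exact R
end
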